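/- Let a₀, b₀, c₀ ∈ ℝ with b₀ ∉ {0, 1/2, 1}, and define H(t) := ln[((t+a₀)² + (b₀−1)²)/((t+a₀)² + b₀²)], Λ(t) := (1−2b₀)²/(4((t+a₀)² + b₀²)((t+a₀)² + (b₀−1)²)), and F(n,t) := Λ(t)·sech²((n/2)H(t) + 2c₀). Then for every fixed t ∈ ℝ one has H(t) ≠ 0, and F(n,t) → 0 as n → +∞ and as n → −∞. -/

import Mathlib

open Filter

lemma cosh_tendsto_atTop : Tendsto Real.cosh atTop atTop := by
  apply tendsto_atTop_mono (f := fun x => Real.exp x / 2)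
  · intro x
    rw [Real.cosh_eq]
    have := Real.exp_pos (-x)
    linarith
  · exact (Real.tendsto_exp_atTop).atTop_div_const two_pos

lemma cosh_tendsto_atBot : Tendsto Real.cosh atBot atTop := by
  apply tendsto_atTop_mono (f := fun x => Real.exp (-x) / 2)
  · intro x
    rw [Real.cosh_eq]
    have := Real.exp_pos x
    linarith
  · exact (Real.tendsto_exp_atTop.comp tendsto_neg_atBot_atTop).atTop_div_const two_pos

lemma aux_decay {c : ℝ} {g : ℝ → ℝ} {l : Filter ℝ}
    (hg : Tendsto (fun n => Real.cosh (g n)) l atTop) :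
    Tendsto (fun n : ℝ => c * (1 / Real.cosh (g n)) ^ 2) l (nhds 0) := by
  have h1 : Tendsto (fun n => 1 / Real.cosh (g n)) l (nhds 0) := by
    simp only [one_div]
    exact hg.inv_tendsto_atTop
  have := ((h1.pow 2).const_mul c)
  simpa using this

/-- Spatial localization of the 1-soliton: for every fixed time `t` the inverse width
`H(t)` is nonzero and `F(n,t) → 0` as `n → ±∞`. -/
theorem one_soliton_spatial_decay (a₀ b₀ c₀ : ℝ)
    (hb0 : b₀ ≠ 0) (hbhalf : b₀ ≠ 1 / 2) (hb1 : b₀ ≠ 1)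
    (H Λ : ℝ → ℝ) (F : ℝ → ℝ → ℝ)
    (hH : ∀ t : ℝ, H t = Real.log
      (((t + a₀) ^ 2 + (b₀ - 1) ^ 2) / ((t + a₀) ^ 2 + b₀ ^ 2)))
    (hΛ : ∀ t : ℝ, Λ t = (1 - 2 * b₀) ^ 2
      / (4 * ((t + a₀) ^ 2 + b₀ ^ 2) * ((t + a₀) ^ 2 + (b₀ - 1) ^ 2)))
    (hF : ∀ n t : ℝ, F n t = Λ t * (1 / Real.cosh ((n / 2) * H t + 2 * c₀)) ^ 2) :
    ∀ t : ℝ, H t ≠ 0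
      ∧ Tendsto (fun n : ℝ => F n t) atTop (nhds 0)
      ∧ Tendsto (fun n : ℝ => F n t) atBot (nhds 0) := by
  intro t
  have hb : (t + a₀) ^ 2 + b₀ ^ 2 > 0 := by positivity
  have hb1' : (t + a₀) ^ 2 + (b₀ - 1) ^ 2 > 0 := by
    have : b₀ - 1 ≠ 0 := sub_ne_zero.mpr hb1
    positivity
  have hHne : H t ≠ 0 := by
    rw [hH]
    intro h
    rcases Real.log_eq_zero.mp h with h | h | h
    · exact absurd h (ne_of_gt (div_pos hb1' hb))
    · have := (div_eq_one_iff_eq (ne_of_gt hb)).mp h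
      apply hbhalf
      nlinarith
    · have := (div_eq_iff (ne_of_gt hb)).mp h
      nlinarith [hb, hb1']
  refine ⟨hHne, ?_, ?_⟩
  · have hg : Tendsto (fun n : ℝ => Real.cosh ((n / 2) * H t + 2 * c₀)) atTop atTop := by
      rcases lt_or_gt_of_ne hHne with hneg | hpos
      · apply cosh_tendsto_atBot.comp
        apply tendsto_atBot_add_const_right
        exact (tendsto_id.atTop_div_const two_pos).atTop_mul_const_of_neg hneg
      · apply cosh_tendsto_atTop.comp
        apply tendsto_atTop_add_const_right
        exact (tendsto_id.atTop_div_const two_pos).atTop_mul_const hpos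
    simpa only [hF] using aux_decay (c := Λ t) hg
  · have hg : Tendsto (fun n : ℝ => Real.cosh ((n / 2) * H t + 2 * c₀)) atBot atTop := by
      rcases lt_or_gt_of_ne hHne with hneg | hpos
      · apply cosh_tendsto_atTop.comp
        apply tendsto_atTop_add_const_right
        exact (tendsto_id.atBot_div_const two_pos).atBot_mul_const_of_neg hneg
      · apply cosh_tendsto_atBot.comp
        apply tendsto_atBot_add_const_right
        exact (tendsto_id.atBot_div_const two_pos).atBot_mul_const hpos
    simpa only [hF] using aux_decay (c := Λ t) hg
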